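/- Let F : X → 2^X be an upper semicontinuous set-valued map with the set-valued shadowing property on a compact totally disconnected Hausdorff space X, and let (U_λ)_{λ∈Λ} be a cofinal directed family in Part(X). Then: (1) the inverse limit system (lim←(O(U_λ), ι), lim← σ_λ) is conjugate to (lim←(PO(U_λ), ι), lim← σ_λ), where σ_λ is the shift and ι are the induced coordinatewise bonding maps; and (2) both inverse systems (ι, O(U_λ)) and (ι, PO(U_λ)) satisfy the Mittag-Leffler condition. -/

import Mathlib

open Set Filter Metric Topology

section Defs

variable {X : Type*} [TopologicalSpace X]

/-- A finite open cover of `X`. -/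
def IsFOC (U : Set (Set X)) : Prop :=
  U.Finite ∧ (∀ V ∈ U, IsOpen V) ∧ ⋃₀ U = Set.univ

/-- Upper semicontinuity for set-valued maps. -/
def USCSV (F : X → Set X) : Prop :=
  ∀ x : X, ∀ U : Set X, IsOpen U → F x ⊆ U →
    ∃ V : Set X, IsOpen V ∧ x ∈ V ∧ ∀ y ∈ V, F y ⊆ U

/-- Lower semicontinuity for set-valued maps. -/
def LSCSV (F : X → Set X) : Prop :=
  ∀ x : X, ∀ U : Set X, IsOpen U → (F x ∩ U).Nonempty →
    ∃ V : Set X, IsOpen V ∧ x ∈ V ∧ ∀ y ∈ V, (F y ∩ U).Nonempty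

/-- An `F`-orbit. -/
def IsSVOrbit (F : X → Set X) (z : ℕ → X) : Prop := ∀ i, z (i + 1) ∈ F (z i)

/-- The orbit space of a set-valued system. -/
def svOrbitSet (F : X → Set X) : Set (ℕ → X) := {w | ∀ i, w (i + 1) ∈ F (w i)}

/-- A `𝒱`-pseudo-orbit of the set-valued map `F`. -/
def IsSVPseudoOrbit (F : X → Set X) (V : Set (Set X)) (x : ℕ → X) : Prop :=
  ∀ i, ∃ W ∈ V, (F (x i) ∩ W).Nonempty ∧ x (i + 1) ∈ W

/-- `x` is `𝒰`-shadowed by `z`. -/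
def ShadowedBy (U : Set (Set X)) (x z : ℕ → X) : Prop :=
  ∀ i, ∃ W ∈ U, x i ∈ W ∧ z i ∈ W

/-- The set-valued shadowing property (finite open cover version). -/
def SVShadowing (F : X → Set X) : Prop :=
  ∀ U : Set (Set X), IsFOC U → ∃ V : Set (Set X), IsFOC V ∧
    ∀ x : ℕ → X, IsSVPseudoOrbit F V x →
      ∃ z : ℕ → X, IsSVOrbit F z ∧ ShadowedBy U x z

/-- Inverse image of a set under a set-valued map: `F⁻¹(A) = {x | F x ∩ A ≠ ∅}`. -/
def Finv (F : X → Set X) (A : Set X) : Set X := {x | (F x ∩ A).Nonempty}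

/-- The `n`-tuple orbital discriminant `[U_0, …, U_n]`. -/
def tupleDisc (F : X → Set X) : ℕ → (ℕ → Set X) → Set X
  | 0, U => U 0
  | n + 1, U => U 0 ∩ Finv F (tupleDisc F n fun i => U (i + 1))

/-- The orbital discriminant `[U_i] = ⋂ₙ [U_0, …, U_n]`. -/
def seqDisc (F : X → Set X) (U : ℕ → Set X) : Set X := ⋂ n, tupleDisc F n U

end Defs

section Part

variable {X : Type*} [TopologicalSpace X]

/-- A finite partition of `X` into nonempty clopen sets. -/
def IsClopenPartition (U : Set (Set X)) : Prop :=
  U.Finite ∧ (∀ W ∈ U, IsClopen W ∧ W.Nonempty) ∧ ⋃₀ U = Set.univ ∧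
    ∀ W₁ ∈ U, ∀ W₂ ∈ U, W₁ ≠ W₂ → W₁ ∩ W₂ = ∅

/-- The coded version of `O(𝒰)` for a partition `𝒰 = {P k : k < N}`: sequences of codes
whose associated sequence of partition members is an orbit pattern (`[U_i] ≠ ∅`). -/
def OCode (F : X → Set X) (P : ℕ → Set X) (N : ℕ) : Set (ℕ → ℕ) :=
  {w | (∀ i, w i < N) ∧ (seqDisc F fun i => P (w i)).Nonempty}

/-- The coded version of `PO(𝒰)` for a partition `𝒰 = {P k : k < N}`: sequences of codes
whose associated sequence of partition members is a pseudo-orbit pattern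
(`F(U_i) ∩ U_{i+1} ≠ ∅` for all `i`). -/
def POCode (F : X → Set X) (P : ℕ → Set X) (N : ℕ) : Set (ℕ → ℕ) :=
  {w | (∀ i, w i < N) ∧ ∀ i, ∃ x ∈ P (w i), (F x ∩ P (w (i + 1))).Nonempty}

/-- The image, under the coordinatewise refinement bonding map `ι` from level `e` to
level `l`, of a set `S` of coded sequences over the partition of level `e`. -/
def iotaCodeImage (Pl : ℕ → Set X) (Nl : ℕ) (Pe : ℕ → Set X) (S : Set (ℕ → ℕ)) :
    Set (ℕ → ℕ) :=
  {w | (∀ i, w i < Nl) ∧ ∃ v ∈ S, ∀ i, Pe (v i) ⊆ Pl (w i)}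

/-- The inverse limit, over a directed family of partitions `P l`, of the spaces
`S l` of coded sequences, with the refinement bonding maps. -/
def limCode {Λ : Type*} [Preorder Λ] (P : Λ → ℕ → Set X) (S : ∀ _ : Λ, Set (ℕ → ℕ)) :
    Set (Λ → ℕ → ℕ) :=
  {u | (∀ l, u l ∈ S l) ∧ ∀ l e : Λ, l ≤ e → ∀ i, P e (u e i) ⊆ P l (u l i)}

end Part


section Aux
variable {X : Type*} [TopologicalSpace X]

lemma Finv_mono (F : X → Set X) {A B : Set X} (h : A ⊆ B) : Finv F A ⊆ Finv F B :=
  fun _ hx => hx.mono (Set.inter_subset_inter_right _ h)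

lemma isClosed_Finv {F : X → Set X} (hFusc : USCSV F) {A : Set X} (hA : IsClosed A) :
    IsClosed (Finv F A) := by
  rw [← isOpen_compl_iff, isOpen_iff_forall_mem_open]
  intro x hx
  have hsub : F x ⊆ Aᶜ := by
    intro y hy
    by_contra hc
    exact hx ⟨y, hy, not_not.mp hc⟩
  obtain ⟨V, hVo, hxV, hV⟩ := hFusc x Aᶜ hA.isOpen_compl hsub
  exact ⟨V, fun y hy hmem => (hV y hy hmem.choose_spec.1) hmem.choose_spec.2, hVo, hxV⟩

lemma tupleDisc_antitone (F : X → Set X) :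
    ∀ (n : ℕ) (U : ℕ → Set X), tupleDisc F (n + 1) U ⊆ tupleDisc F n U := by
  intro n
  induction n with
  | zero => exact fun U x hx => hx.1
  | succ n ih =>
      intro U x hx
      exact ⟨hx.1, Finv_mono F (ih _) hx.2⟩

lemma isClosed_tupleDisc {F : X → Set X} (hFusc : USCSV F) :
    ∀ (n : ℕ) (U : ℕ → Set X), (∀ i, IsClosed (U i)) → IsClosed (tupleDisc F n U) := by
  intro n
  induction n with
  | zero => exact fun U hU => hU 0
  | succ n ih =>
      intro U hU
      exact (hU 0).inter (isClosed_Finv hFusc (ih _ fun i => hU (i + 1)))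

lemma orbit_mem_tupleDisc {F : X → Set X} :
    ∀ (n : ℕ) (z : ℕ → X) (U : ℕ → Set X), IsSVOrbit F z → (∀ i, z i ∈ U i) →
      z 0 ∈ tupleDisc F n U := by
  intro n
  induction n with
  | zero => exact fun z U _ hU => hU 0
  | succ n ih =>
      intro z U hz hU
      exact ⟨hU 0, z 1, hz 0, ih (fun i => z (i + 1)) _ (fun i => hz (i + 1))
        (fun i => hU (i + 1))⟩

lemma orbit_mem_seqDisc {F : X → Set X} {z : ℕ → X} {U : ℕ → Set X}
    (hz : IsSVOrbit F z) (hU : ∀ i, z i ∈ U i) : z 0 ∈ seqDisc F U :=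
  Set.mem_iInter.mpr fun n => orbit_mem_tupleDisc n z U hz hU

variable [T2Space X]

lemma seqDisc_step {F : X → Set X} (hFcpt : ∀ x, IsCompact (F x)) (hFusc : USCSV F)
    {U : ℕ → Set X} (hU : ∀ i, IsClosed (U i)) {x : X} (hx : x ∈ seqDisc F U) :
    ∃ y, y ∈ F x ∧ y ∈ seqDisc F (fun i => U (i + 1)) := by
  have h1 : ∀ n, (F x ∩ tupleDisc F n (fun i => U (i + 1))).Nonempty := fun n =>
    (Set.mem_iInter.mp hx (n + 1)).2
  have h2 : (⋂ n, F x ∩ tupleDisc F n (fun i => U (i + 1))).Nonempty := by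
    refine IsCompact.nonempty_iInter_of_sequence_nonempty_isCompact_isClosed _
      (fun n => Set.inter_subset_inter_right _ (tupleDisc_antitone F n _)) h1
      (((hFcpt x).inter_right (isClosed_tupleDisc hFusc 0 _ fun i => hU (i + 1))))
      (fun n => ((hFcpt x).isClosed).inter (isClosed_tupleDisc hFusc n _ fun i => hU (i + 1)))
  obtain ⟨y, hy⟩ := h2
  rw [← Set.inter_iInter] at hy
  exact ⟨y, hy.1, hy.2⟩

lemma exists_orbit_of_seqDisc {F : X → Set X} (hFcpt : ∀ x, IsCompact (F x))
    (hFusc : USCSV F) {U : ℕ → Set X} (hU : ∀ i, IsClosed (U i))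
    (h : (seqDisc F U).Nonempty) : ∃ z, IsSVOrbit F z ∧ ∀ i, z i ∈ U i := by
  obtain ⟨x0, hx0⟩ := h
  have key : ∀ n (x : X), x ∈ seqDisc F (fun i => U (i + n)) →
      ∃ y, y ∈ F x ∧ y ∈ seqDisc F (fun i => U (i + (n + 1))) := by
    intro n x hx
    obtain ⟨y, hy1, hy2⟩ := seqDisc_step hFcpt hFusc (U := fun i => U (i + n))
      (fun i => hU _) hx
    refine ⟨y, hy1, ?_⟩
    have e : (fun i => U (i + 1 + n)) = fun i => U (i + (n + 1)) :=
      funext fun i => congrArg U (by omega)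
    rwa [e] at hy2
  let Z : (n : ℕ) → {x : X // x ∈ seqDisc F fun i => U (i + n)} := fun n =>
    Nat.rec ⟨x0, by simpa using hx0⟩
      (fun n p => ⟨(key n p.1 p.2).choose, (key n p.1 p.2).choose_spec.2⟩) n
  refine ⟨fun n => (Z n).1, fun i => (key i (Z i).1 (Z i).2).choose_spec.1, fun i => ?_⟩
  have h0 := Set.mem_iInter.mp (Z i).2 0
  simpa [tupleDisc] using h0

end Aux

lemma exists_clopenPartition_refines {X : Type*} [TopologicalSpace X] [CompactSpace X]
    [T2Space X] [TotallyDisconnectedSpace X]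
    (V : Set (Set X)) (hV : IsFOC V) :
    ∃ U : Set (Set X), IsClopenPartition U ∧ ∀ W ∈ U, ∃ V' ∈ V, W ⊆ V' := by
  obtain ⟨hVfin, hVopen, hVcov⟩ := hV
  have hC : ∀ x : X, ∃ C : Set X, IsClopen C ∧ x ∈ C ∧ ∃ V' ∈ V, C ⊆ V' := by
    intro x
    have hx : x ∈ ⋃₀ V := by rw [hVcov]; trivial
    obtain ⟨V', hV', hxV'⟩ := hx
    obtain ⟨C, hCclopen, hxC, hCsub⟩ := compact_exists_isClopen_in_isOpen (hVopen V' hV') hxV'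
    exact ⟨C, hCclopen, hxC, V', hV', hCsub⟩
  choose C hCclopen hxC hCsub using hC
  obtain ⟨t, ht⟩ := IsCompact.elim_finite_subcover isCompact_univ C
    (fun x => (hCclopen x).2) (fun x _ => mem_iUnion.mpr ⟨x, hxC x⟩)
  set n := t.card with hn
  let q : Fin n → X := fun i => (t.equivFin.symm i).1
  let C0 : ℕ → Set X := fun i => if h : i < n then C (q ⟨i, h⟩) else ∅
  have hC0clopen : ∀ i, IsClopen (C0 i) := by
    intro i
    by_cases h : i < n
    · simpa [C0, h] using hCclopen (q ⟨i, h⟩)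
    · simpa [C0, h] using isClopen_empty
  have hC0cov : ∀ x : X, ∃ i, x ∈ C0 i := by
    intro x
    obtain ⟨_, ⟨y, rfl⟩, h2⟩ := ht (mem_univ x)
    obtain ⟨_, ⟨hy, rfl⟩, h3⟩ := h2
    refine ⟨(t.equivFin ⟨y, hy⟩).1, ?_⟩
    have hlt := (t.equivFin ⟨y, hy⟩).2
    simp only [C0, hlt, dif_pos]
    have : q ⟨(t.equivFin ⟨y, hy⟩).1, hlt⟩ = y := by
      simp [q, Fin.eta]
    rw [dif_pos (show (t.equivFin ⟨y, hy⟩).1 < n from hlt), this]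
    exact h3
  let D : ℕ → Set X := fun i => C0 i \ ⋃ j ∈ Finset.range i, C0 j
  have hDclopen : ∀ i, IsClopen (D i) :=
    fun i => (hC0clopen i).diff (isClopen_biUnion_finset fun j _ => hC0clopen j)
  have hDsub : ∀ i, D i ⊆ C0 i := fun i => diff_subset
  have hDdisj : ∀ i j, i ≠ j → D i ∩ D j = ∅ := by
    intro i j hij
    rcases Nat.lt_or_ge i j with h | h
    · apply eq_empty_of_forall_notMem
      rintro x ⟨hxi, hxj⟩
      exact hxj.2 (mem_biUnion (Finset.mem_range.mpr h) (hDsub i hxi))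
    · have h' : j < i := by omega
      apply eq_empty_of_forall_notMem
      rintro x ⟨hxi, hxj⟩
      exact hxi.2 (mem_biUnion (Finset.mem_range.mpr h') (hDsub j hxj))
  have hDcov : ∀ x : X, ∃ i, x ∈ D i := by
    classical
    intro x
    have hex : ∃ i, x ∈ C0 i := hC0cov x
    refine ⟨Nat.find hex, Nat.find_spec hex, ?_⟩
    intro hmem
    obtain ⟨j, hj1, hj2⟩ := mem_iUnion₂.mp hmem
    exact Nat.find_min hex (Finset.mem_range.mp hj1) hj2
  have hDempty : ∀ i, n ≤ i → D i = ∅ := by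
    intro i hi
    have : C0 i = ∅ := by simp [C0, Nat.not_lt.mpr hi]
    simp [D, this]
  refine ⟨{W | (∃ i, W = D i) ∧ W.Nonempty}, ⟨?_, ?_, ?_, ?_⟩, ?_⟩
  · apply Set.Finite.subset (((Set.finite_Iio n).image D).union (Set.finite_singleton ∅))
    rintro W ⟨⟨i, rfl⟩, hne⟩
    by_cases h : i < n
    · exact Or.inl ⟨i, h, rfl⟩
    · exact (hne.ne_empty (hDempty i (Nat.not_lt.mp h))).elim
  · rintro W ⟨⟨i, rfl⟩, hne⟩
    exact ⟨hDclopen i, hne⟩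
  · apply eq_univ_of_forall
    intro x
    obtain ⟨i, hi⟩ := hDcov x
    exact ⟨D i, ⟨⟨i, rfl⟩, ⟨x, hi⟩⟩, hi⟩
  · rintro W₁ ⟨⟨i, rfl⟩, _⟩ W₂ ⟨⟨j, rfl⟩, _⟩ hne
    exact hDdisj i j (fun h => hne (by rw [h]))
  · rintro W ⟨⟨i, rfl⟩, hne⟩
    have hi : i < n := by
      by_contra h
      exact hne.ne_empty (hDempty i (Nat.not_lt.mp h))
    refine ⟨(hCsub (q ⟨i, hi⟩)).choose, (hCsub (q ⟨i, hi⟩)).choose_spec.1, ?_⟩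
    refine (hDsub i).trans ?_
    simp only [C0, hi, dif_pos]
    exact (hCsub (q ⟨i, hi⟩)).choose_spec.2

/-- Theorem 5.6: for an usc set-valued map with the set-valued shadowing
property on a compact totally disconnected Hausdorff space and a cofinal directed family
of finite clopen partitions `(𝒰_λ)`, (1) the inverse limit of the orbit-pattern systems
`(O(𝒰_λ), σ)` is conjugate to the inverse limit of the pseudo-orbit-pattern systems
`(PO(𝒰_λ), σ)`, and (2) both inverse systems satisfy the Mittag-Leffler condition.
(Partitions are coded: the partition `𝒰_λ` is `{P λ k : k < N λ}`.) -/
theorem limO_conj_limPO_and_ML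
    {X : Type*} [TopologicalSpace X] [CompactSpace X] [T2Space X]
    [TotallyDisconnectedSpace X]
    (F : X → Set X)
    (hFne : ∀ x, (F x).Nonempty) (hFcpt : ∀ x, IsCompact (F x)) (hFusc : USCSV F)
    (hshad : SVShadowing F)
    {Λ : Type*} [Preorder Λ] [IsDirected Λ (· ≤ ·)]
    (P : Λ → ℕ → Set X) (N : Λ → ℕ)
    (hclopen : ∀ l : Λ, ∀ k < N l, IsClopen (P l k) ∧ (P l k).Nonempty)
    (hcover : ∀ l : Λ, (⋃ (k : ℕ) (_ : k < N l), P l k) = Set.univ)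
    (hdisj : ∀ l : Λ, ∀ j < N l, ∀ k < N l, j ≠ k → P l j ∩ P l k = ∅)
    (hrefine : ∀ l e : Λ, l ≤ e → ∀ k < N e, ∃ j < N l, P e k ⊆ P l j)
    (hcofinal : ∀ U : Set (Set X), IsClopenPartition U →
      ∃ l : Λ, ∀ k < N l, ∃ W ∈ U, P l k ⊆ W) :
    (∃ h : ↥(limCode P fun l => OCode F (P l) (N l)) ≃ₜ
        ↥(limCode P fun l => POCode F (P l) (N l)),
      ∀ u : ↥(limCode P fun l => OCode F (P l) (N l)),
        ∃ hm : (fun (l : Λ) (i : ℕ) => (u : Λ → ℕ → ℕ) l (i + 1)) ∈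
            (limCode P fun l => OCode F (P l) (N l)),
          ((h ⟨fun l i => (u : Λ → ℕ → ℕ) l (i + 1), hm⟩ :
              ↥(limCode P fun l => POCode F (P l) (N l))) : Λ → ℕ → ℕ)
            = fun l i => ((h u : ↥(limCode P fun l => POCode F (P l) (N l))) : Λ → ℕ → ℕ)
                l (i + 1)) ∧
    (∀ l : Λ, ∃ e : Λ, l ≤ e ∧ ∀ m : Λ, e ≤ m →
      iotaCodeImage (P l) (N l) (P e) (OCode F (P e) (N e))
        = iotaCodeImage (P l) (N l) (P m) (OCode F (P m) (N m))) ∧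
    (∀ l : Λ, ∃ e : Λ, l ≤ e ∧ ∀ m : Λ, e ≤ m →
      iotaCodeImage (P l) (N l) (P e) (POCode F (P e) (N e))
        = iotaCodeImage (P l) (N l) (P m) (POCode F (P m) (N m))) := by
    classical
  have hPclosed : ∀ l k, k < N l → IsClosed (P l k) := fun l k hk => (hclopen l k hk).1.isClosed
  have code : ∀ (l : Λ) (x : X), ∃ k, k < N l ∧ x ∈ P l k := by
    intro l x
    have hx : x ∈ ⋃ (k : ℕ) (_ : k < N l), P l k := by rw [hcover l]; trivial
    simpa using hx
  choose cd hcdlt hcdmem using code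
  have uniq : ∀ l : Λ, ∀ j < N l, ∀ k < N l, (P l j ∩ P l k).Nonempty → j = k := by
    intro l j hj k hk hne
    by_contra h
    exact hne.ne_empty (hdisj l j hj k hk h)
  have hOorbit : ∀ (l : Λ) (w : ℕ → ℕ), w ∈ OCode F (P l) (N l) →
      ∃ z, IsSVOrbit F z ∧ ∀ i, z i ∈ P l (w i) := fun l w hw =>
    exists_orbit_of_seqDisc hFcpt hFusc (fun i => hPclosed l (w i) (hw.1 i)) hw.2
  have O_sub_PO : ∀ l : Λ, OCode F (P l) (N l) ⊆ POCode F (P l) (N l) := by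
    intro l w hw
    obtain ⟨z, hz, hzi⟩ := hOorbit l w hw
    exact ⟨hw.1, fun i => ⟨z i, hzi i, z (i + 1), hz i, hzi (i + 1)⟩⟩
  have mem_image_iff : ∀ l m : Λ, l ≤ m → ∀ w : ℕ → ℕ, (∀ i, w i < N l) →
      (w ∈ iotaCodeImage (P l) (N l) (P m) (OCode F (P m) (N m)) ↔
        ∃ z, IsSVOrbit F z ∧ ∀ i, z i ∈ P l (w i)) := by
    intro l m hlm w hw
    constructor
    · rintro ⟨-, v, hv, hsub⟩
      obtain ⟨z, hz, hzi⟩ := hOorbit m v hv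
      exact ⟨z, hz, fun i => hsub i (hzi i)⟩
    · rintro ⟨z, hz, hzi⟩
      refine ⟨hw, fun i => cd m (z i), ⟨fun i => hcdlt m (z i), z 0,
        orbit_mem_seqDisc hz fun i => hcdmem m (z i)⟩, fun i => ?_⟩
      obtain ⟨j, hj, hsub⟩ := hrefine l m hlm (cd m (z i)) (hcdlt m (z i))
      have hjw : j = w i := uniq l j hj (w i) (hw i) ⟨z i, hsub (hcdmem m (z i)), hzi i⟩
      rwa [hjw] at hsub
  have shad_data : ∀ l : Λ, ∃ e : Λ, l ≤ e ∧ ∀ m : Λ, e ≤ m →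
      ∀ v ∈ POCode F (P m) (N m), ∀ w : ℕ → ℕ, (∀ i, w i < N l) →
      (∀ i, P m (v i) ⊆ P l (w i)) → ∃ z, IsSVOrbit F z ∧ ∀ i, z i ∈ P l (w i) := by
    intro l
    have hUfoc : IsFOC (P l '' Set.Iio (N l)) := by
      refine ⟨(Set.finite_Iio (N l)).image _, ?_, ?_⟩
      · rintro W ⟨k, hk, rfl⟩
        exact (hclopen l k hk).1.isOpen
      · rw [sUnion_image]
        simpa using hcover l
    obtain ⟨V, hVfoc, hVshad⟩ := hshad _ hUfoc
    obtain ⟨Up, hUp, hUpref⟩ := exists_clopenPartition_refines V hVfoc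
    obtain ⟨l₁, hl₁⟩ := hcofinal Up hUp
    obtain ⟨e, hle, hl₁e⟩ := directed_of (· ≤ ·) l l₁
    refine ⟨e, hle, ?_⟩
    intro m hem v hv w hw hsub
    have hmV : ∀ k, k < N m → ∃ W ∈ V, P m k ⊆ W := by
      intro k hk
      obtain ⟨j, hj, hsub1⟩ := hrefine l₁ m (hl₁e.trans hem) k hk
      obtain ⟨W, hW, hsub2⟩ := hl₁ j hj
      obtain ⟨W', hW', hsub3⟩ := hUpref W hW
      exact ⟨W', hW', hsub1.trans (hsub2.trans hsub3)⟩
    choose x hx1 hx2 using hv.2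
    have hpo : IsSVPseudoOrbit F V x := by
      intro i
      obtain ⟨W, hW, hWsub⟩ := hmV (v (i + 1)) (hv.1 (i + 1))
      exact ⟨W, hW, (hx2 i).mono (Set.inter_subset_inter_right _ hWsub), hWsub (hx1 (i + 1))⟩
    obtain ⟨z, hz, hsh⟩ := hVshad x hpo
    refine ⟨z, hz, fun i => ?_⟩
    obtain ⟨W, hW, hxW, hzW⟩ := hsh i
    obtain ⟨k, hk, rfl⟩ := hW
    have hkw : k = w i := uniq l k (Set.mem_Iio.mp hk) (w i) (hw i)
      ⟨x i, hxW, hsub i (hx1 i)⟩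
    rwa [← hkw]
  have imgO_eq : ∀ l e m : Λ, l ≤ e → l ≤ m →
      iotaCodeImage (P l) (N l) (P e) (OCode F (P e) (N e)) =
      iotaCodeImage (P l) (N l) (P m) (OCode F (P m) (N m)) := by
    intro l e m hle hlm
    ext w
    constructor
    · intro hmem
      exact (mem_image_iff l m hlm w hmem.1).mpr ((mem_image_iff l e hle w hmem.1).mp hmem)
    · intro hmem
      exact (mem_image_iff l e hle w hmem.1).mpr ((mem_image_iff l m hlm w hmem.1).mp hmem)
  have hOP : limCode P (fun l => OCode F (P l) (N l)) =
      limCode P (fun l => POCode F (P l) (N l)) := by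
    ext u
    constructor
    · rintro ⟨h1, h2⟩
      exact ⟨fun l => O_sub_PO l (h1 l), h2⟩
    · rintro ⟨h1, h2⟩
      refine ⟨fun l => ?_, h2⟩
      obtain ⟨e, hle, hkey⟩ := shad_data l
      obtain ⟨z, hz, hzi⟩ := hkey e le_rfl (u e) (h1 e) (u l) (h1 l).1 (h2 l e hle)
      exact ⟨(h1 l).1, z 0, orbit_mem_seqDisc hz hzi⟩
  have hshiftmem : ∀ u : ↥(limCode P fun l => OCode F (P l) (N l)),
      (fun (l : Λ) (i : ℕ) => (u : Λ → ℕ → ℕ) l (i + 1)) ∈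
        limCode P fun l => OCode F (P l) (N l) := by
    rintro ⟨u, h1, h2⟩
    refine ⟨fun l => ?_, fun l e hle i => h2 l e hle (i + 1)⟩
    obtain ⟨z, hz, hzi⟩ := hOorbit l (u l) (h1 l)
    exact ⟨fun i => (h1 l).1 (i + 1), z 1,
      orbit_mem_seqDisc (z := fun i => z (i + 1)) (fun i => hz (i + 1))
        (fun i => hzi (i + 1))⟩
  refine ⟨⟨Homeomorph.setCongr hOP, fun u => ⟨hshiftmem u, rfl⟩⟩, ?_, ?_⟩
  · intro l
    exact ⟨l, le_rfl, fun m hm => imgO_eq l l m le_rfl hm⟩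
  · intro l
    obtain ⟨e, hle, hkey⟩ := shad_data l
    have imgPO_O : ∀ m : Λ, e ≤ m →
        iotaCodeImage (P l) (N l) (P m) (POCode F (P m) (N m)) =
        iotaCodeImage (P l) (N l) (P m) (OCode F (P m) (N m)) := by
      intro m hem
      ext w
      constructor
      · rintro ⟨hw, v, hv, hsub⟩
        obtain ⟨z, hz, hzi⟩ := hkey m hem v hv w hw hsub
        exact (mem_image_iff l m (hle.trans hem) w hw).mpr ⟨z, hz, hzi⟩
      · rintro ⟨hw, v, hv, hsub⟩
        exact ⟨hw, v, O_sub_PO m hv, hsub⟩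
    refine ⟨e, hle, fun m hem => ?_⟩
    rw [imgPO_O e le_rfl, imgPO_O m hem, imgO_eq l e m hle (hle.trans hem)]
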